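/- Let G be a Lie group and let ξ₀, ξ₁, ξ: ℝ → T_1G be smooth curves such that ξ(t) = 2·ξ₀(2t) for all t ∈ [0, 1/2] and ξ(t) = 2·ξ₁(2t − 1) for all t ∈ [1/2, 1]. Let g₀, g₁, g be the developments of ξ₀, ξ₁, ξ respectively. Then g(1) = g₁(1)·g₀(1); that is, ∫₀¹(ξ₁ ⊙ ξ₀) = (∫₀¹ξ₁)·(∫₀¹ξ₀). -/

import Mathlib

open scoped Manifold

/-- The logarithmic derivative of a smooth curve `g : ℝ → G` in a Lie group, evaluated on the
standard unit tangent vector `∂/∂t`. -/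
noncomputable def curveLogDeriv
    {E : Type*} [NormedAddCommGroup E] [NormedSpace ℝ E]
    {H : Type*} [TopologicalSpace H] (I : ModelWithCorners ℝ E H)
    {G : Type*} [TopologicalSpace G] [ChartedSpace H G] [Group G] [LieGroup I (⊤ : ℕ∞) G]
    (g : ℝ → G) (t : ℝ) : TangentSpace I (1 : G) :=
  mfderiv I I (fun h : G => h * (g t)⁻¹) (g t) (mfderiv 𝓘(ℝ, ℝ) I g t (1 : ℝ))

/-- `g : ℝ → G` is the development of the curve `ξ : ℝ → T₁G`: it is smooth, starts at the
identity, and has logarithmic derivative `ξ`. One writes `∫₀ᵗ ξ := g t`. -/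
def IsDevelopment
    {E : Type*} [NormedAddCommGroup E] [NormedSpace ℝ E]
    {H : Type*} [TopologicalSpace H] (I : ModelWithCorners ℝ E H)
    {G : Type*} [TopologicalSpace G] [ChartedSpace H G] [Group G] [LieGroup I (⊤ : ℕ∞) G]
    (ξ : ℝ → TangentSpace I (1 : G)) (g : ℝ → G) : Prop :=
  ContMDiff 𝓘(ℝ, ℝ) I (⊤ : ℕ∞) g ∧ g 0 = 1 ∧ ∀ t : ℝ, curveLogDeriv I g t = ξ t

open Set

section Aux
variable {E : Type*} [NormedAddCommGroup E] [NormedSpace ℝ E]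
  {H : Type*} [TopologicalSpace H] {I : ModelWithCorners ℝ E H}
  {G : Type*} [TopologicalSpace G] [ChartedSpace H G] [Group G] [LieGroup I (⊤ : ℕ∞) G]
  {F : Type*} [NormedAddCommGroup F] [NormedSpace ℝ F]
  {H' : Type*} [TopologicalSpace H'] {J : ModelWithCorners ℝ F H'}
  {M : Type*} [TopologicalSpace M] [ChartedSpace H' M]

/-- Product rule for `mfderiv` in a Lie group. -/
lemma mfderiv_mul_apply {f g : M → G} {z : M} (hf : MDifferentiableAt J I f z)
    (hg : MDifferentiableAt J I g z) (v : TangentSpace J z) :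
    mfderiv J I (fun w => f w * g w) z v
      = mfderiv I I (· * g z) (f z) (mfderiv J I f z v)
        + mfderiv I I (f z * ·) (g z) (mfderiv J I g z v) := by
  have hμ : MDifferentiableAt (I.prod I) I (fun p : G × G => p.1 * p.2) (f z, g z) :=
    (contMDiff_mul I (⊤ : ℕ∞)).mdifferentiableAt (by simp)
  have key : mfderiv J I (fun w => f w * g w) z =
      (mfderiv (I.prod I) I (fun p : G × G => p.1 * p.2) (f z, g z)).comp
        (mfderiv J (I.prod I) (fun w => (f w, g w)) z) :=
    mfderiv_comp z hμ (hf.prodMk hg)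
  rw [key, hf.mfderiv_prod hg]
  set u := mfderiv J I f z v
  set w := mfderiv J I g z v
  have h1 : ((u, w) : TangentSpace I (f z) × TangentSpace I (g z)) = (u, 0) + (0, w) := by
    simp
  erw [ContinuousLinearMap.comp_apply, ContinuousLinearMap.prod_apply, h1, map_add]
  congr 1
  · have hc : (fun x : G => x * g z) = (fun p : G × G => p.1 * p.2) ∘ (fun x => (x, g z)) := rfl
    have hcomp := mfderiv_comp (I' := I.prod I) (I'' := I) (f z) hμ
      (mdifferentiableAt_id.prodMk mdifferentiableAt_const)
    simp only [id_eq] at hcomp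
    rw [hc, hcomp, mfderiv_prod_left]
    rfl
  · have hc : (fun y : G => f z * y) = (fun p : G × G => p.1 * p.2) ∘ (fun y => (f z, y)) := rfl
    have hcomp := mfderiv_comp (I' := I.prod I) (I'' := I) (g z) hμ
      (mdifferentiableAt_const.prodMk mdifferentiableAt_id)
    simp only [id_eq] at hcomp
    rw [hc, hcomp, mfderiv_prod_right]
    rfl

lemma mdiff_mul_right {k p : G} : MDifferentiableAt I I (· * k) p :=
  (contMDiff_mul_right (n := (⊤ : ℕ∞))).mdifferentiableAt (by simp)

lemma mdiff_mul_left {k p : G} : MDifferentiableAt I I (k * ·) p :=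
  (contMDiff_mul_left (n := (⊤ : ℕ∞))).mdifferentiableAt (by simp)

lemma mfderiv_rr (h₂ h₁ : G) (p : G) (v : TangentSpace I p) :
    mfderiv I I (· * h₁) (p * h₂) (mfderiv I I (· * h₂) p v)
      = mfderiv I I (· * (h₂ * h₁)) p v := by
  have hc : (fun z : G => z * (h₂ * h₁)) = (· * h₁) ∘ (· * h₂) := by
    funext z; simp [mul_assoc]
  rw [hc, mfderiv_comp p mdiff_mul_right mdiff_mul_right]; rfl

lemma mfderiv_ll (k₁ k₂ : G) (p : G) (v : TangentSpace I p) :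
    mfderiv I I (k₁ * ·) (k₂ * p) (mfderiv I I (k₂ * ·) p v)
      = mfderiv I I ((k₁ * k₂) * ·) p v := by
  have hc : (fun z : G => (k₁ * k₂) * z) = (k₁ * ·) ∘ (k₂ * ·) := by
    funext z; simp [mul_assoc]
  rw [hc, mfderiv_comp p mdiff_mul_left mdiff_mul_left]; rfl

lemma mfderiv_lr (k h : G) (p : G) (v : TangentSpace I p) :
    mfderiv I I (· * h) (k * p) (mfderiv I I (k * ·) p v)
      = mfderiv I I (k * ·) (p * h) (mfderiv I I (· * h) p v) := by
  have h1 : (fun z : G => k * z * h) = (· * h) ∘ (k * ·) := rfl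
  have h2 : (fun z : G => k * z * h) = (k * ·) ∘ (· * h) := by funext z; simp [mul_assoc]
  have e1 : mfderiv I I (fun z : G => k * z * h) p v
      = mfderiv I I (· * h) (k * p) (mfderiv I I (k * ·) p v) := by
    rw [h1, mfderiv_comp p mdiff_mul_right mdiff_mul_left]; rfl
  have e2 : mfderiv I I (fun z : G => k * z * h) p v
      = mfderiv I I (k * ·) (p * h) (mfderiv I I (· * h) p v) := by
    rw [h2, mfderiv_comp p mdiff_mul_left mdiff_mul_right]; rfl
  exact e1.symm.trans e2

lemma mfderiv_inv_aux (y : G) (w : TangentSpace I y) :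
    mfderiv I I (y * ·) y⁻¹ (mfderiv I I (fun z : G => z⁻¹) y w)
      = - mfderiv I I (· * y⁻¹) y w := by
  have hinv : MDifferentiableAt I I (fun z : G => z⁻¹) y :=
    (contMDiff_inv I (⊤ : ℕ∞)).mdifferentiableAt (by simp)
  have h0 : mfderiv I I (fun z : G => z * z⁻¹) y w = 0 := by
    have hc : (fun z : G => z * z⁻¹) = fun _ : G => (1 : G) := by funext z; simp
    rw [hc, mfderiv_const]
    rfl
  have hkey := mfderiv_mul_apply (J := I) (f := fun z : G => z) (g := fun z : G => z⁻¹)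
    mdifferentiableAt_id hinv w
  rw [h0] at hkey
  have hid : mfderiv I I (fun z : G => z) y w = w := by
    rw [show (fun z : G => z) = @id G from rfl, mfderiv_id]
    rfl
  rw [hid] at hkey
  exact eq_neg_of_add_eq_zero_left (by rw [add_comm]; exact hkey.symm)

/-- If two curves have the same logarithmic derivative at `t`, then `s ↦ (b s)⁻¹ * a s` has
zero derivative at `t`. -/
lemma mfderiv_quot_zero {a b : ℝ → G} {t : ℝ}
    (ha : MDifferentiableAt 𝓘(ℝ, ℝ) I a t) (hb : MDifferentiableAt 𝓘(ℝ, ℝ) I b t)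
    (h : curveLogDeriv I a t = curveLogDeriv I b t) :
    mfderiv 𝓘(ℝ, ℝ) I (fun s => (b s)⁻¹ * a s) t = 0 := by
  have hinv : MDifferentiableAt I I (fun z : G => z⁻¹) (b t) :=
    (contMDiff_inv I (⊤ : ℕ∞)).mdifferentiableAt (by simp)
  have hbinv : MDifferentiableAt 𝓘(ℝ, ℝ) I (fun s => (b s)⁻¹) t := hinv.comp t hb
  set x := a t with hx
  set y := b t with hy
  set u : TangentSpace I x := mfderiv 𝓘(ℝ, ℝ) I a t (1 : ℝ) with hu
  set w : TangentSpace I y := mfderiv 𝓘(ℝ, ℝ) I b t (1 : ℝ) with hw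
  set e : TangentSpace I (1 : G) := mfderiv I I (· * x⁻¹) x u with he
  have he' : mfderiv I I (· * y⁻¹) y w = e := h.symm
  -- value of the derivative of the quotient curve at 1
  have key : mfderiv 𝓘(ℝ, ℝ) I (fun s => (b s)⁻¹ * a s) t (1 : ℝ) = 0 := by
    have hmul := mfderiv_mul_apply (J := 𝓘(ℝ, ℝ)) (f := fun s => (b s)⁻¹) (g := a)
      hbinv ha (1 : ℝ)
    -- derivative of s ↦ (b s)⁻¹
    have hcomp : mfderiv 𝓘(ℝ, ℝ) I (fun s => (b s)⁻¹) t (1 : ℝ)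
        = mfderiv I I (fun z : G => z⁻¹) y w := by
      rw [show (fun s => (b s)⁻¹) = (fun z : G => z⁻¹) ∘ b from rfl,
        mfderiv_comp t hinv hb]
      rfl
    set n : TangentSpace I y⁻¹ := mfderiv I I (fun z : G => z⁻¹) y w with hn
    -- identify n
    have hLn : mfderiv I I (y * ·) y⁻¹ n = - e := by
      rw [hn, mfderiv_inv_aux, he']
      rfl
    have hnval : n = - mfderiv I I (y⁻¹ * ·) (1 : G) e := by
      have h1 : mfderiv I I (y⁻¹ * ·) (y * y⁻¹) (mfderiv I I (y * ·) y⁻¹ n)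
          = mfderiv I I ((y⁻¹ * y) * ·) y⁻¹ n := mfderiv_ll y⁻¹ y y⁻¹ n
      rw [hLn] at h1
      rw [inv_mul_cancel] at h1
      rw [show ((fun z : G => (1 : G) * z)) = @id G from by funext z; simp] at h1
      rw [mfderiv_id] at h1
      have h2 : mfderiv I I (y⁻¹ * ·) (y * y⁻¹) (- e) = - mfderiv I I (y⁻¹ * ·) (y * y⁻¹) e :=
        map_neg _ e
      rw [h2] at h1
      rw [show y * y⁻¹ = (1 : G) from mul_inv_cancel y] at h1
      exact (h1.symm : _)
    -- identify u
    have huval : u = mfderiv I I (· * x) (1 : G) e := by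
      have h1 : mfderiv I I (· * x) (x * x⁻¹) (mfderiv I I (· * x⁻¹) x u)
          = mfderiv I I (· * (x⁻¹ * x)) x u := mfderiv_rr x⁻¹ x x u
      rw [← he, inv_mul_cancel] at h1
      rw [show ((fun z : G => z * (1 : G))) = @id G from by funext z; simp] at h1
      rw [mfderiv_id] at h1
      rw [show x * x⁻¹ = (1 : G) from mul_inv_cancel x] at h1
      exact (h1.symm : _)
    -- combine
    rw [hmul, hcomp, ← hx, ← hy, ← hu, hnval]
    erw [map_neg]
    have hswap : mfderiv I I (· * x) y⁻¹ (mfderiv I I (y⁻¹ * ·) (1 : G) e)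
        = mfderiv I I (y⁻¹ * ·) ((1 : G) * x) (mfderiv I I (· * x) (1 : G) e) := by
      have := mfderiv_lr y⁻¹ x (1 : G) e
      rwa [show y⁻¹ * (1 : G) = y⁻¹ from mul_one y⁻¹] at this
    rw [hswap, one_mul, huval]
    exact neg_add_cancel _
  -- upgrade to the full linear map
  apply ContinuousLinearMap.ext_ring
  exact key

/-- Curves with the same logarithmic derivative on an interval and the same initial value agree
at the endpoint. -/
lemma eq_of_curveLogDeriv_eqOn {a b : ℝ → G} {s₀ s₁ : ℝ} (hs : s₀ ≤ s₁)
    (ha : ContMDiff 𝓘(ℝ, ℝ) I (⊤ : ℕ∞) a) (hb : ContMDiff 𝓘(ℝ, ℝ) I (⊤ : ℕ∞) b)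
    (h : ∀ t ∈ Icc s₀ s₁, curveLogDeriv I a t = curveLogDeriv I b t)
    (h0 : a s₀ = b s₀) : a s₁ = b s₁ := by
  set c : ℝ → G := fun s => (b s)⁻¹ * a s with hc
  have hcsm : ContMDiff 𝓘(ℝ, ℝ) I (⊤ : ℕ∞) c := hb.inv.mul ha
  have hder : ∀ t ∈ Icc s₀ s₁, mfderiv 𝓘(ℝ, ℝ) I c t = 0 := fun t ht =>
    mfderiv_quot_zero (ha.mdifferentiable (by simp) t) (hb.mdifferentiable (by simp) t) (h t ht)
  have key : ∀ t₀ ∈ Icc s₀ s₁, ∃ ε > 0, ∀ t ∈ Icc s₀ s₁, |t - t₀| < ε → c t = c t₀ := by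
    intro t₀ ht₀
    have hopen : IsOpen (c ⁻¹' (chartAt H (c t₀)).source) :=
      (chartAt H (c t₀)).open_source.preimage hcsm.continuous
    obtain ⟨ε, hε, hball⟩ := Metric.isOpen_iff.mp hopen t₀ (by
      simp only [mem_preimage]; exact mem_chart_source H (c t₀))
    refine ⟨ε / 2, by positivity, ?_⟩
    intro t ht hlt
    set A := max s₀ (t₀ - ε / 2) with hA
    set B := min s₁ (t₀ + ε / 2) with hB
    have hAB : Icc A B ⊆ Icc s₀ s₁ ∩ Metric.ball t₀ ε := by
      intro r hr
      refine ⟨⟨le_trans (le_max_left _ _) hr.1, le_trans hr.2 (min_le_left _ _)⟩, ?_⟩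
      have h1 := le_trans (le_max_right _ _) hr.1
      have h2 := le_trans hr.2 (min_le_right _ _)
      rw [Metric.mem_ball, Real.dist_eq, abs_lt]
      constructor <;> linarith
    set φ := extChartAt I (c t₀) with hφ
    set yy : ℝ → E := fun s => φ (c s) with hyy
    have hyd : ∀ r ∈ Icc A B, HasDerivAt yy 0 r := by
      intro r hr
      obtain ⟨hr1, hr2⟩ := hAB hr
      have hsrc : c r ∈ (chartAt H (c t₀)).source := hball hr2
      have hφd : MDifferentiableAt I 𝓘(ℝ, E) φ (c r) := mdifferentiableAt_extChartAt hsrc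
      have hcd : MDifferentiableAt 𝓘(ℝ, ℝ) I c r := hcsm.mdifferentiable (by simp) r
      have hyd' : MDifferentiableAt 𝓘(ℝ, ℝ) 𝓘(ℝ, E) yy r := hφd.comp r hcd
      have hmf : mfderiv 𝓘(ℝ, ℝ) 𝓘(ℝ, E) yy r = 0 := by
        rw [show yy = φ ∘ c from rfl, mfderiv_comp r hφd hcd, hder r hr1,
          ContinuousLinearMap.comp_zero]
      have hdiff : DifferentiableAt ℝ yy r := mdifferentiableAt_iff_differentiableAt.mp hyd'
      have hfd : fderiv ℝ yy r = 0 := by rw [← mfderiv_eq_fderiv]; exact hmf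
      have hd := hdiff.hasDerivAt
      rwa [show deriv yy r = 0 from by rw [← fderiv_apply_one_eq_deriv, hfd]; rfl] at hd
    have hcont : ContinuousOn yy (Icc A B) := by
      apply (continuousOn_extChartAt (c t₀)).comp hcsm.continuous.continuousOn
      intro r hr
      rw [extChartAt_source]
      exact hball (hAB hr).2
    have hconst := constant_of_has_deriv_right_zero hcont
      (fun r hr => (hyd r (Ico_subset_Icc_self hr)).hasDerivWithinAt)
    have htmem : t ∈ Icc A B := by
      rw [abs_lt] at hlt
      constructor
      · exact max_le ht.1 (by linarith)
      · exact le_min ht.2 (by linarith)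
    have ht₀mem : t₀ ∈ Icc A B := by
      constructor
      · exact max_le ht₀.1 (by linarith)
      · exact le_min ht₀.2 (by linarith)
    have h1 : yy t = yy t₀ := by rw [hconst t htmem, hconst t₀ ht₀mem]
    have hsrc_t : c t ∈ φ.source := by
      rw [hφ, extChartAt_source]
      exact hball (hAB htmem).2
    have hsrc_t₀ : c t₀ ∈ φ.source := by
      rw [hφ, extChartAt_source]
      exact mem_chart_source H (c t₀)
    calc c t = φ.symm (yy t) := (φ.left_inv hsrc_t).symm
    _ = φ.symm (yy t₀) := by rw [h1]
    _ = c t₀ := φ.left_inv hsrc_t₀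
  have hpre : PreconnectedSpace (Icc s₀ s₁) := Subtype.preconnectedSpace isPreconnected_Icc
  have hlc : IsLocallyConstant (fun p : Icc s₀ s₁ => c p) := by
    rw [IsLocallyConstant.iff_exists_open]
    rintro ⟨x, hx⟩
    obtain ⟨ε, hε, hkey⟩ := key x hx
    refine ⟨Subtype.val ⁻¹' Metric.ball x ε,
      Metric.isOpen_ball.preimage continuous_subtype_val, by simpa using hε, ?_⟩
    rintro ⟨x', hx'⟩ hmem
    exact hkey x' hx' (by simpa [Real.dist_eq] using hmem)
  have hends := hlc.apply_eq_of_preconnectedSpace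
    ⟨s₁, right_mem_Icc.mpr hs⟩ ⟨s₀, left_mem_Icc.mpr hs⟩
  have hc1 : (b s₁)⁻¹ * a s₁ = 1 := by
    have : c s₁ = c s₀ := hends
    rw [hc] at this
    simp only at this
    rw [this, h0, inv_mul_cancel]
  exact (inv_mul_eq_one.mp hc1).symm

/-- The logarithmic derivative is invariant under right translation by a constant. -/
lemma curveLogDeriv_mul_const {b : ℝ → G} (hb : ContMDiff 𝓘(ℝ, ℝ) I (⊤ : ℕ∞) b) (k : G) (t : ℝ) :
    curveLogDeriv I (fun s => b s * k) t = curveLogDeriv I b t := by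
  have hbd : MDifferentiableAt 𝓘(ℝ, ℝ) I b t := hb.mdifferentiable (by simp) t
  have h1 : mfderiv 𝓘(ℝ, ℝ) I (fun s => b s * k) t (1 : ℝ)
      = mfderiv I I (· * k) (b t) (mfderiv 𝓘(ℝ, ℝ) I b t (1 : ℝ)) := by
    rw [show (fun s => b s * k) = (· * k) ∘ b from rfl, mfderiv_comp t mdiff_mul_right hbd]
    rfl
  unfold curveLogDeriv
  rw [h1, mfderiv_rr k (b t * k)⁻¹ (b t) (mfderiv 𝓘(ℝ, ℝ) I b t (1 : ℝ)),
    show (fun z : G => z * (k * (b t * k)⁻¹)) = (fun z : G => z * (b t)⁻¹) from by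
      funext z; congr 1; group]
  rfl

/-- The logarithmic derivative of an affine reparametrization. -/
lemma curveLogDeriv_comp_affine {g : ℝ → G} (hg : ContMDiff 𝓘(ℝ, ℝ) I (⊤ : ℕ∞) g) (m r t : ℝ) :
    curveLogDeriv I (fun s => g (m * s + r)) t = m • curveLogDeriv I g (m * t + r) := by
  set p : ℝ := m * t + r with hp
  have hφ : ∀ s : ℝ, HasDerivAt (fun s : ℝ => m * s + r) m s := fun s => by
    simpa using ((hasDerivAt_id s).const_mul m).add_const r
  have hφd : MDifferentiableAt 𝓘(ℝ, ℝ) 𝓘(ℝ, ℝ) (fun s : ℝ => m * s + r) t :=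
    mdifferentiableAt_iff_differentiableAt.mpr (hφ t).differentiableAt
  have hgd : MDifferentiableAt 𝓘(ℝ, ℝ) I g p := hg.mdifferentiable (by simp) p
  have h1 : mfderiv 𝓘(ℝ, ℝ) 𝓘(ℝ, ℝ) (fun s : ℝ => m * s + r) t (1 : ℝ) = m := by
    rw [mfderiv_eq_fderiv]
    show (fderiv ℝ (fun s : ℝ => m * s + r) t) (1 : ℝ) = m
    exact fderiv_apply_one_eq_deriv.trans (hφ t).deriv
  have h2 : mfderiv 𝓘(ℝ, ℝ) I (fun s => g (m * s + r)) t (1 : ℝ)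
      = m • mfderiv 𝓘(ℝ, ℝ) I g p (1 : ℝ) := by
    rw [show (fun s => g (m * s + r)) = g ∘ (fun s : ℝ => m * s + r) from rfl,
      mfderiv_comp t (by rw [hp] at hgd; exact hgd) hφd]
    show mfderiv 𝓘(ℝ, ℝ) I g (m * t + r)
      (mfderiv 𝓘(ℝ, ℝ) 𝓘(ℝ, ℝ) (fun s : ℝ => m * s + r) t (1 : ℝ)) = _
    rw [h1, ← hp]
    conv_lhs => rw [show (m : ℝ) = m • (1 : ℝ) from by simp]
    exact map_smul _ m (1 : ℝ)
  unfold curveLogDeriv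
  beta_reduce
  rw [← hp, h2, map_smul]
  rfl

end Aux


/-- Development takes concatenation of `𝔤`-paths to products:
`∫₀¹ (ξ₁ ⊙ ξ₀) = (∫₀¹ ξ₁) * (∫₀¹ ξ₀)`. -/
theorem development_concatenation
    {E : Type*} [NormedAddCommGroup E] [NormedSpace ℝ E]
    {H : Type*} [TopologicalSpace H] (I : ModelWithCorners ℝ E H)
    {G : Type*} [TopologicalSpace G] [ChartedSpace H G] [Group G] [LieGroup I (⊤ : ℕ∞) G]
    (ξ₀ ξ₁ ξ : ℝ → TangentSpace I (1 : G))
    (hξ₀ : ContMDiff 𝓘(ℝ, ℝ) 𝓘(ℝ, E) (⊤ : ℕ∞) (fun t => show E from ξ₀ t))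
    (hξ₁ : ContMDiff 𝓘(ℝ, ℝ) 𝓘(ℝ, E) (⊤ : ℕ∞) (fun t => show E from ξ₁ t))
    (hξ : ContMDiff 𝓘(ℝ, ℝ) 𝓘(ℝ, E) (⊤ : ℕ∞) (fun t => show E from ξ t))
    (hconcat₀ : ∀ t ∈ Set.Icc (0 : ℝ) (1 / 2), ξ t = (2 : ℝ) • ξ₀ (2 * t))
    (hconcat₁ : ∀ t ∈ Set.Icc (1 / 2 : ℝ) 1, ξ t = (2 : ℝ) • ξ₁ (2 * t - 1))
    (g₀ g₁ g : ℝ → G)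
    (hg₀ : IsDevelopment I ξ₀ g₀) (hg₁ : IsDevelopment I ξ₁ g₁) (hg : IsDevelopment I ξ g) :
    g 1 = g₁ 1 * g₀ 1 := by
  obtain ⟨hg₀s, hg₀0, hg₀d⟩ := hg₀
  obtain ⟨hg₁s, hg₁0, hg₁d⟩ := hg₁
  obtain ⟨hgs, hg0, hgd⟩ := hg
  have haff : ∀ m r : ℝ, ContMDiff 𝓘(ℝ, ℝ) 𝓘(ℝ, ℝ) (⊤ : ℕ∞) (fun s : ℝ => m * s + r) := fun m r =>
    contMDiff_iff_contDiff.mpr (by fun_prop)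
  -- Step 1: on [0, 1/2], `g` agrees with `g₀ (2 ·)`.
  have hb₀ : ContMDiff 𝓘(ℝ, ℝ) I (⊤ : ℕ∞) (fun s => g₀ (2 * s + 0)) := hg₀s.comp (haff 2 0)
  have step1 : g (1 / 2) = g₀ (2 * (1 / 2) + 0) := by
    apply eq_of_curveLogDeriv_eqOn (by norm_num : (0 : ℝ) ≤ 1 / 2) hgs hb₀
    · intro t ht
      rw [hgd t, curveLogDeriv_comp_affine hg₀s 2 0 t, hg₀d (2 * t + 0), add_zero,
        hconcat₀ t ht]
    · rw [hg0, show (2 : ℝ) * 0 + 0 = 0 from by norm_num, hg₀0]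
  rw [show (2 : ℝ) * (1 / 2) + 0 = 1 from by norm_num] at step1
  -- Step 2: on [1/2, 1], `g` agrees with `g₁ (2 · - 1) * g₀ 1`.
  have hb₁ : ContMDiff 𝓘(ℝ, ℝ) I (⊤ : ℕ∞) (fun s => g₁ (2 * s + -1) * g₀ 1) :=
    (hg₁s.comp (haff 2 (-1))).mul contMDiff_const
  have step2 : g 1 = g₁ (2 * 1 + -1) * g₀ 1 := by
    apply eq_of_curveLogDeriv_eqOn (by norm_num : (1 / 2 : ℝ) ≤ 1) hgs hb₁
    · intro t ht
      rw [hgd t, curveLogDeriv_mul_const (b := fun s => g₁ (2 * s + -1)) (hg₁s.comp (haff 2 (-1))) (g₀ 1) t,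
        curveLogDeriv_comp_affine hg₁s 2 (-1) t, hg₁d (2 * t + -1),
        show (2 : ℝ) * t + -1 = 2 * t - 1 from by ring, hconcat₁ t ht]
    · rw [step1, show (2 : ℝ) * (1 / 2) + -1 = 0 from by norm_num, hg₁0, one_mul]
  rw [show (2 : ℝ) * 1 + -1 = 1 from by norm_num] at step2
  exact step2
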